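/- Let K ⊆ (Σ × Σ)* and L ⊆ Σ* be weakly acyclic languages over a finite alphabet Σ that are pre-compatible. Then Pre(K, L) is a weakly acyclic language. -/

import Mathlib

/-- A DFA is *weakly acyclic* if whenever a nonempty word `w` loops on a state `q`,
every letter occurring in `w` self-loops on `q`. -/
def DFA.WeaklyAcyclic {α : Type*} {σ : Type*} (A : DFA α σ) : Prop :=
  ∀ (q : σ) (w : List α), w ≠ [] → A.evalFrom q w = q → ∀ a ∈ w, A.step q a = q

/-- A language is weakly acyclic if it is accepted by some weakly acyclic DFA
with finitely many states. -/
def Language.IsWeaklyAcyclic {α : Type*} (L : Language α) : Prop :=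
  ∃ (σ : Type) (_ : Fintype σ) (A : DFA α σ), A.WeaklyAcyclic ∧ A.accepts = L

/-- The residual of the language `L` with respect to the word `u`. -/
def Language.residual {α : Type*} (L : Language α) (u : List α) : Language α :=
  {v | u ++ v ∈ L}

/-- `Pre K L` is the set of words `u` such that `zip(u, v) ∈ K` and `v ∈ L`
for some word `v` of the same length as `u`. -/
def Pre {α : Type*} (K : Language (α × α)) (L : Language α) : Language α :=
  {u | ∃ v : List α, v.length = u.length ∧ u.zip v ∈ K ∧ v ∈ L}

/-- `K` and `L` are pre-compatible if for all words `u, v` of equal length and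
every letter `a`, there is at most one letter `b` such that
`K^{zip(u,v)·(a,b)} ≠ ∅` and `L^{v·b} ≠ ∅`. -/
def PreCompatible {α : Type*} (K : Language (α × α)) (L : Language α) : Prop :=
  ∀ (u v : List α), v.length = u.length → ∀ (a b₁ b₂ : α),
    K.residual (u.zip v ++ [(a, b₁)]) ≠ ⊥ → L.residual (v ++ [b₁]) ≠ ⊥ →
    K.residual (u.zip v ++ [(a, b₂)]) ≠ ⊥ → L.residual (v ++ [b₂]) ≠ ⊥ →
    b₁ = b₂

namespace PreWA

lemma lang_ne_bot {β : Type*} (L : Language β) : L ≠ ⊥ ↔ ∃ w, w ∈ L := by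
  constructor
  · intro h
    by_contra hne
    exact h (Set.eq_empty_iff_forall_notMem.mpr (by push_neg at hne; exact hne))
  · rintro ⟨w, hw⟩ h
    rw [h] at hw
    exact hw

lemma residual_ne_bot {β σ : Type*} (A : DFA β σ) (x : List β) :
    A.accepts.residual x ≠ ⊥ ↔ ∃ w, A.evalFrom (A.eval x) w ∈ A.accept := by
  rw [lang_ne_bot]
  constructor
  · rintro ⟨w, hw⟩
    change x ++ w ∈ A.accepts at hw
    rw [DFA.mem_accepts, DFA.eval,
      DFA.evalFrom_of_append] at hw
    exact ⟨w, hw⟩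
  · rintro ⟨w, hw⟩
    exact ⟨w, by change x ++ w ∈ A.accepts; rwa [DFA.mem_accepts, DFA.eval,
      DFA.evalFrom_of_append]⟩

variable {α : Type} {σA σB : Type} (A : DFA (α × α) σA) (B : DFA α σB)

/-- `b` is a candidate continuation at product state `(p, q)` reading letter `a`. -/
def Cond (p : σA) (q : σB) (a b : α) : Prop :=
  (∃ w, A.evalFrom (A.step p (a, b)) w ∈ A.accept) ∧
  (∃ w, B.evalFrom (B.step q b) w ∈ B.accept)

open Classical in
/-- The deterministic product automaton. -/
noncomputable def P : DFA α (Option (σA × σB)) where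
  step s a :=
    match s with
    | none => none
    | some (p, q) =>
      if h : ∃ b, Cond A B p q a b then
        some (A.step p (a, h.choose), B.step q h.choose)
      else none
  start := some (A.start, B.start)
  accept := {s | ∃ p q, s = some (p, q) ∧ p ∈ A.accept ∧ q ∈ B.accept}

lemma P_step_none (a : α) : (P A B).step none a = none := rfl

lemma P_evalFrom_none (w : List α) : (P A B).evalFrom none w = none := by
  induction w with
  | nil => rfl
  | cons a t ih => simpa [DFA.evalFrom, P_step_none] using ih

open Classical in
lemma P_step_some (p : σA) (q : σB) (a : α) (h : ∃ b, Cond A B p q a b) :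
    (P A B).step (some (p, q)) a = some (A.step p (a, h.choose), B.step q h.choose) := by
  simp only [P, dif_pos h]

open Classical in
lemma P_step_some_neg (p : σA) (q : σB) (a : α) (h : ¬ ∃ b, Cond A B p q a b) :
    (P A B).step (some (p, q)) a = none := by
  simp only [P, dif_neg h]

/-- Cond at a "reachable" state corresponds to nonempty residuals. -/
lemma cond_iff_residual (u v : List α) (hlen : v.length = u.length) (a b : α) :
    Cond A B (A.eval (u.zip v)) (B.eval v) a b ↔
      A.accepts.residual (u.zip v ++ [(a, b)]) ≠ ⊥ ∧
      B.accepts.residual (v ++ [b]) ≠ ⊥ := by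
  rw [residual_ne_bot, residual_ne_bot, DFA.eval_append_singleton, DFA.eval_append_singleton]
  rfl

variable {K : Language (α × α)} {L : Language α}

lemma cond_unique (hKacc : A.accepts = K) (hLacc : B.accepts = L)
    (hcomp : PreCompatible K L) (u v : List α) (hlen : v.length = u.length)
    (a b₁ b₂ : α) (h₁ : Cond A B (A.eval (u.zip v)) (B.eval v) a b₁)
    (h₂ : Cond A B (A.eval (u.zip v)) (B.eval v) a b₂) : b₁ = b₂ := by
  rw [cond_iff_residual A B u v hlen] at h₁ h₂
  rw [hKacc, hLacc] at h₁ h₂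
  exact hcomp u v hlen a b₁ b₂ h₁.1 h₁.2 h₂.1 h₂.2

/-- Runs of the product automaton that don't die produce a partner word. -/
lemma run_ex : ∀ (w : List α) (p : σA) (q : σB),
    (P A B).evalFrom (some (p, q)) w ≠ none →
    ∃ w' : List α, w'.length = w.length ∧
      (P A B).evalFrom (some (p, q)) w = some (A.evalFrom p (w.zip w'), B.evalFrom q w') ∧
      ∀ a b t t', w = a :: t → w' = b :: t' → Cond A B p q a b := by
  intro w
  induction w with
  | nil =>
    intro p q _
    exact ⟨[], rfl, rfl, by intro a b t t' h; simp at h⟩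
  | cons a t ih =>
    intro p q hne
    by_cases h : ∃ b, Cond A B p q a b
    · have hstep := P_step_some A B p q a h
      have hev : (P A B).evalFrom (some (p, q)) (a :: t) =
          (P A B).evalFrom (some (A.step p (a, h.choose), B.step q h.choose)) t := by
        rw [show (a :: t) = [a] ++ t from rfl, DFA.evalFrom_of_append, DFA.evalFrom_singleton,
          hstep]
      rw [hev] at hne
      obtain ⟨t', hlen, heval, _⟩ := ih (A.step p (a, h.choose)) (B.step q h.choose) hne
      refine ⟨h.choose :: t', by simp [hlen], ?_, ?_⟩
      · rw [hev, heval]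
        rfl
      · rintro a' b' s s' h1 h2
        injection h1 with e1 e2
        injection h2 with e3 e4
        subst e1 e3
        exact h.choose_spec
    · exfalso
      apply hne
      rw [show (a :: t) = [a] ++ t from rfl, DFA.evalFrom_of_append, DFA.evalFrom_singleton,
        P_step_some_neg A B p q a h, P_evalFrom_none]


lemma ne_prefix {β σ : Type*} (A : DFA β σ) (x y : List β)
    (h : ∃ w, A.evalFrom (A.eval (x ++ y)) w ∈ A.accept) :
    ∃ w, A.evalFrom (A.eval x) w ∈ A.accept := by
  obtain ⟨w, hw⟩ := h
  have hxy : A.eval (x ++ y) = A.evalFrom (A.eval x) y := DFA.evalFrom_of_append A A.start x y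
  exact ⟨y ++ w, by rw [DFA.evalFrom_of_append, ← hxy]; exact hw⟩

lemma zip_snoc (u v : List α) (hlen : v.length = u.length) (a b : α) :
    (u ++ [a]).zip (v ++ [b]) = u.zip v ++ [(a, b)] := by
  rw [List.zip_append hlen.symm]
  rfl

/-- Weak acyclicity of the product automaton at reachable states. -/
lemma P_wa_at (hA : A.WeaklyAcyclic) (hB : B.WeaklyAcyclic)
    (hKacc : A.accepts = K) (hLacc : B.accepts = L) (hcomp : PreCompatible K L)
    (u v : List α) (hlen : v.length = u.length) (w : List α) (hw : w ≠ [])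
    (hloop : (P A B).evalFrom (some (A.eval (u.zip v), B.eval v)) w
      = some (A.eval (u.zip v), B.eval v)) :
    ∀ a ∈ w, (P A B).step (some (A.eval (u.zip v), B.eval v)) a
      = some (A.eval (u.zip v), B.eval v) := by
  set p := A.eval (u.zip v) with hp
  set q := B.eval v with hq
  have hne : (P A B).evalFrom (some (p, q)) w ≠ none := by rw [hloop]; simp
  obtain ⟨w', hlen', heval, hhead⟩ := run_ex A B w p q hne
  rw [hloop] at heval
  have hpair := Option.some.inj heval
  have hploop : A.evalFrom p (w.zip w') = p := (congrArg Prod.fst hpair).symm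
  have hqloop : B.evalFrom q w' = q := (congrArg Prod.snd hpair).symm
  have hzlen : (w.zip w').length = w.length := by rw [List.length_zip, hlen', min_self]
  have hzipne : w.zip w' ≠ [] := by
    intro h
    apply hw
    rw [← List.length_eq_zero_iff, ← hzlen, h]
    rfl
  have hw'ne : w' ≠ [] := by
    intro h
    apply hw
    rw [← List.length_eq_zero_iff, ← hlen', h]
    rfl
  have hSA : ∀ x ∈ w.zip w', A.step p x = p := hA p (w.zip w') hzipne hploop
  have hSB : ∀ b ∈ w', B.step q b = q := hB q w' hw'ne hqloop
  obtain ⟨a₀, t, rfl⟩ := List.exists_cons_of_ne_nil hw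
  obtain ⟨b₀, t', rfl⟩ := List.exists_cons_of_ne_nil hw'ne
  have hcond0 : Cond A B p q a₀ b₀ := hhead a₀ b₀ t t' rfl rfl
  have hpa0 : A.step p (a₀, b₀) = p := hSA _ (by simp [List.zip_cons_cons])
  have hqb0 : B.step q b₀ = q := hSB b₀ (by simp)
  have hPne : ∃ wa, A.evalFrom p wa ∈ A.accept := by rw [← hpa0]; exact hcond0.1
  have hQne : ∃ wb, B.evalFrom q wb ∈ B.accept := by rw [← hqb0]; exact hcond0.2
  intro a ha
  obtain ⟨i, hi, rfl⟩ := List.getElem_of_mem ha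
  have hi' : i < (b₀ :: t').length := by rw [hlen']; exact hi
  have hiz : i < ((a₀ :: t).zip (b₀ :: t')).length := by rw [hzlen]; exact hi
  set b := (b₀ :: t')[i] with hb
  have hzmem : ((a₀ :: t)[i], b) ∈ (a₀ :: t).zip (b₀ :: t') := by
    rw [hb, ← List.getElem_zip (h := hiz)]
    exact List.getElem_mem hiz
  have hstepA : A.step p ((a₀ :: t)[i], b) = p := hSA _ hzmem
  have hstepB : B.step q b = q := hSB _ (List.getElem_mem hi')
  have hcond : Cond A B p q (a₀ :: t)[i] b :=
    ⟨by rw [hstepA]; exact hPne, by rw [hstepB]; exact hQne⟩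
  have hex : ∃ b', Cond A B p q (a₀ :: t)[i] b' := ⟨b, hcond⟩
  rw [P_step_some A B p q _ hex]
  have hcb : hex.choose = b :=
    cond_unique A B hKacc hLacc hcomp u v hlen _ _ _ hex.choose_spec hcond
  rw [hcb, hstepA, hstepB]

/-- Reachable states of the product automaton. -/
def Reach (s : Option (σA × σB)) : Prop :=
  s = none ∨ ∃ u v : List α, v.length = u.length ∧ s = some (A.eval (u.zip v), B.eval v)

lemma reach_step {s : Option (σA × σB)} (h : Reach A B s) (a : α) :
    Reach A B ((P A B).step s a) := by
  rcases h with rfl | ⟨u, v, hlen, rfl⟩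
  · exact Or.inl rfl
  · by_cases hex : ∃ b, Cond A B (A.eval (u.zip v)) (B.eval v) a b
    · rw [P_step_some A B _ _ a hex]
      refine Or.inr ⟨u ++ [a], v ++ [hex.choose], by simp [hlen], ?_⟩
      rw [zip_snoc u v hlen, DFA.eval_append_singleton, DFA.eval_append_singleton]
    · rw [P_step_some_neg A B _ _ a hex]
      exact Or.inl rfl

/-- When a witness exists, the product automaton follows it. -/
lemma trace (hKacc : A.accepts = K) (hLacc : B.accepts = L) (hcomp : PreCompatible K L) :
    ∀ (u₂ v₂ u₁ v₁ : List α), v₁.length = u₁.length → v₂.length = u₂.length →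
    (∃ w, A.evalFrom (A.eval ((u₁ ++ u₂).zip (v₁ ++ v₂))) w ∈ A.accept) →
    (∃ w, B.evalFrom (B.eval (v₁ ++ v₂)) w ∈ B.accept) →
    (P A B).evalFrom (some (A.eval (u₁.zip v₁), B.eval v₁)) u₂ =
      some (A.eval ((u₁ ++ u₂).zip (v₁ ++ v₂)), B.eval (v₁ ++ v₂)) := by
  intro u₂
  induction u₂ with
  | nil =>
    intro v₂ u₁ v₁ _ h2 _ _
    obtain rfl : v₂ = [] := List.length_eq_zero_iff.mp h2
    simp
  | cons a t ih =>
    intro v₂ u₁ v₁ hlen1 hlen2 hKne hLne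
    obtain ⟨b, s, rfl⟩ : ∃ b s, v₂ = b :: s := by
      cases v₂ with
      | nil => simp at hlen2
      | cons b s => exact ⟨b, s, rfl⟩
    have hass : u₁ ++ a :: t = (u₁ ++ [a]) ++ t := by simp
    have hassv : v₁ ++ b :: s = (v₁ ++ [b]) ++ s := by simp
    have hlen1' : (v₁ ++ [b]).length = (u₁ ++ [a]).length := by simp [hlen1]
    have hlen2' : s.length = t.length := by simpa using hlen2
    rw [hass, hassv] at hKne
    rw [hassv] at hLne
    have hKpre : ∃ w, A.evalFrom (A.eval ((u₁ ++ [a]).zip (v₁ ++ [b]))) w ∈ A.accept := by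
      apply ne_prefix A _ (t.zip s)
      rwa [← List.zip_append (by simp [hlen1])]
    have hLpre : ∃ w, B.evalFrom (B.eval (v₁ ++ [b])) w ∈ B.accept :=
      ne_prefix B _ s hLne
    have hcondb : Cond A B (A.eval (u₁.zip v₁)) (B.eval v₁) a b := by
      constructor
      · rw [show A.step (A.eval (u₁.zip v₁)) (a, b) = A.eval ((u₁ ++ [a]).zip (v₁ ++ [b])) by
          rw [zip_snoc u₁ v₁ hlen1, DFA.eval_append_singleton]]
        exact hKpre
      · rw [show B.step (B.eval v₁) b = B.eval (v₁ ++ [b]) by rw [DFA.eval_append_singleton]]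
        exact hLpre
    have hex : ∃ b', Cond A B (A.eval (u₁.zip v₁)) (B.eval v₁) a b' := ⟨b, hcondb⟩
    have hcb : hex.choose = b :=
      cond_unique A B hKacc hLacc hcomp u₁ v₁ hlen1 _ _ _ hex.choose_spec hcondb
    have hstep : (P A B).step (some (A.eval (u₁.zip v₁), B.eval v₁)) a =
        some (A.eval ((u₁ ++ [a]).zip (v₁ ++ [b])), B.eval (v₁ ++ [b])) := by
      rw [P_step_some A B _ _ a hex, hcb, zip_snoc u₁ v₁ hlen1,
        DFA.eval_append_singleton, DFA.eval_append_singleton]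
    have : (P A B).evalFrom (some (A.eval (u₁.zip v₁), B.eval v₁)) (a :: t) =
        (P A B).evalFrom (some (A.eval ((u₁ ++ [a]).zip (v₁ ++ [b])), B.eval (v₁ ++ [b]))) t := by
      rw [show (a :: t) = [a] ++ t from rfl, DFA.evalFrom_of_append, DFA.evalFrom_singleton, hstep]
    rw [this, hass, hassv]
    exact ih s (u₁ ++ [a]) (v₁ ++ [b]) hlen1' hlen2' hKne hLne

/-- The product automaton accepts `Pre K L`. -/
lemma P_accepts (hKacc : A.accepts = K) (hLacc : B.accepts = L) (hcomp : PreCompatible K L) :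
    (P A B).accepts = Pre K L := by
  ext x
  rw [DFA.mem_accepts]
  constructor
  · intro hx
    have hne : (P A B).evalFrom (some (A.start, B.start)) x ≠ none := by
      obtain ⟨p', q', he, _, _⟩ := hx
      rw [show (P A B).eval x = (P A B).evalFrom (some (A.start, B.start)) x from rfl] at he
      rw [he]
      simp
    obtain ⟨w', hlenw, heval, _⟩ := run_ex A B x A.start B.start hne
    obtain ⟨p', q', he, hpacc, hqacc⟩ := hx
    rw [show (P A B).eval x = (P A B).evalFrom (some (A.start, B.start)) x from rfl, heval] at he
    have hpair := Option.some.inj he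
    refine ⟨w', hlenw, ?_, ?_⟩
    · rw [← hKacc, DFA.mem_accepts]
      show A.evalFrom A.start (x.zip w') ∈ A.accept
      rw [show A.evalFrom A.start (x.zip w') = p' from congrArg Prod.fst hpair]
      exact hpacc
    · rw [← hLacc, DFA.mem_accepts]
      show B.evalFrom B.start w' ∈ B.accept
      rw [show B.evalFrom B.start w' = q' from congrArg Prod.snd hpair]
      exact hqacc
  · rintro ⟨v, hlenv, hzK, hvL⟩
    rw [← hKacc, DFA.mem_accepts] at hzK
    rw [← hLacc, DFA.mem_accepts] at hvL
    have := trace A B hKacc hLacc hcomp x v [] [] rfl hlenv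
      (by simpa using ⟨[], hzK⟩) (by simpa using ⟨[], hvL⟩)
    simp only [List.nil_append] at this
    exact ⟨A.eval (x.zip v), B.eval v, this, hzK, hvL⟩


/-- The product automaton restricted to reachable states. -/
noncomputable def Q : DFA α {s : Option (σA × σB) // Reach A B s} where
  step s a := ⟨(P A B).step s.1 a, reach_step A B s.2 a⟩
  start := ⟨(P A B).start, Or.inr ⟨[], [], rfl, rfl⟩⟩
  accept := {s | s.1 ∈ (P A B).accept}

lemma Q_evalFrom (s : {s : Option (σA × σB) // Reach A B s}) (w : List α) :
    ((Q A B).evalFrom s w).1 = (P A B).evalFrom s.1 w := by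
  induction w generalizing s with
  | nil => rfl
  | cons a t ih =>
    rw [show (a :: t) = [a] ++ t from rfl, DFA.evalFrom_of_append, DFA.evalFrom_of_append]
    exact ih _

lemma Q_accepts : (Q A B).accepts = (P A B).accepts := by
  ext x
  rw [DFA.mem_accepts, DFA.mem_accepts]
  show (Q A B).evalFrom (Q A B).start x ∈ {s | s.1 ∈ (P A B).accept} ↔ _
  rw [Set.mem_setOf_eq, Q_evalFrom]
  exact Iff.rfl

lemma Q_wa (hA : A.WeaklyAcyclic) (hB : B.WeaklyAcyclic)
    (hKacc : A.accepts = K) (hLacc : B.accepts = L) (hcomp : PreCompatible K L) :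
    (Q A B).WeaklyAcyclic := by
  rintro ⟨s, hs⟩ w hw hloop a ha
  have hloopP : (P A B).evalFrom s w = s := by
    have h := congrArg Subtype.val hloop
    rwa [Q_evalFrom] at h
  apply Subtype.ext
  show (P A B).step s a = s
  rcases hs with rfl | ⟨u, v, hlen, rfl⟩
  · rfl
  · exact P_wa_at A B hA hB hKacc hLacc hcomp u v hlen w hw hloopP a ha

end PreWA

/-- If `K` and `L` are weakly acyclic and pre-compatible, then `Pre(K, L)` is
weakly acyclic. -/
theorem pre_weaklyAcyclic {α : Type} [Fintype α]
    (K : Language (α × α)) (L : Language α)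
    (hK : K.IsWeaklyAcyclic) (hL : L.IsWeaklyAcyclic)
    (hcomp : PreCompatible K L) : (Pre K L).IsWeaklyAcyclic := by
  obtain ⟨σA, iA, A, hA, hKacc⟩ := hK
  obtain ⟨σB, iB, B, hB, hLacc⟩ := hL
  haveI := iA
  haveI := iB
  refine ⟨{s : Option (σA × σB) // PreWA.Reach A B s}, Fintype.ofFinite _, PreWA.Q A B,
    PreWA.Q_wa A B hA hB hKacc hLacc hcomp, ?_⟩
  rw [PreWA.Q_accepts, PreWA.P_accepts A B hKacc hLacc hcomp]
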